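/- A frame F is scalable with scaling c if and only if for every f ∈ H, min_{u ∈ H} [(1/2)‖D_c T* u‖² − ⟨f, u⟩] = −(1/2)‖f‖². -/

import Mathlib

open scoped RealInnerProductSpace

/-- A frame `F` is scalable with scaling `c` iff for every `f ∈ H`,
`min_{u ∈ H} [(1/2)‖D_c T* u‖² − ⟨f, u⟩] = −(1/2)‖f‖²`. -/
theorem stmt_14 {H : Type*} [NormedAddCommGroup H] [InnerProductSpace ℝ H] [CompleteSpace H]
    {J : Type*} (x : J → H) (A B : ℝ) (hA : 0 < A) (hAB : A ≤ B)
    (hlow : ∀ u : H, A * ‖u‖ ^ 2 ≤ ∑' j, ⟪u, x j⟫ ^ 2)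
    (hhigh : ∀ u : H, ∑' j, ⟪u, x j⟫ ^ 2 ≤ B * ‖u‖ ^ 2)
    (c : J → ℝ) (hc : ∃ C, ∀ j, |c j| ≤ C)
    (Tstar : H →L[ℝ] lp (fun _ : J => ℝ) 2)
    (hT : ∀ (u : H) (j : J), Tstar u j = ⟪u, x j⟫)
    (Dc : lp (fun _ : J => ℝ) 2 →L[ℝ] lp (fun _ : J => ℝ) 2)
    (hDc : ∀ (y : lp (fun _ : J => ℝ) 2) (j : J), Dc y j = c j * y j)
    (hframe : ∃ A' B' : ℝ, 0 < A' ∧ A' ≤ B' ∧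
      (∀ u : H, A' * ‖u‖ ^ 2 ≤ ∑' j, ⟪u, c j • x j⟫ ^ 2) ∧
      (∀ u : H, ∑' j, ⟪u, c j • x j⟫ ^ 2 ≤ B' * ‖u‖ ^ 2)) :
    (∀ u : H, ∑' j, ⟪u, c j • x j⟫ ^ 2 = ‖u‖ ^ 2) ↔
      ∀ f : H, IsLeast (Set.range fun u : H => (1/2) * ‖Dc (Tstar u)‖ ^ 2 - ⟪f, u⟫)
        (-((1/2) * ‖f‖ ^ 2)) := by
  have key : ∀ u : H, ‖Dc (Tstar u)‖ ^ 2 = ∑' j, ⟪u, c j • x j⟫ ^ 2 := by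
    intro u
    have h1 : ⟪Dc (Tstar u), Dc (Tstar u)⟫ = ∑' j, ⟪u, c j • x j⟫ ^ 2 := by
      rw [lp.inner_eq_tsum]
      congr 1
      funext j
      rw [hDc, hT, real_inner_smul_right]
      ring_nf
      simp [RCLike.inner_apply, mul_comm]
      rw [mul_pow, sq_abs, sq_abs]
    rw [← real_inner_self_eq_norm_sq, h1]
  constructor
  · intro hQ f
    constructor
    · refine ⟨f, ?_⟩
      show 1 / 2 * ‖Dc (Tstar f)‖ ^ 2 - ⟪f, f⟫ = -(1 / 2 * ‖f‖ ^ 2)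
      rw [key, hQ, real_inner_self_eq_norm_sq]
      ring
    · rintro y ⟨u, rfl⟩
      show -(1 / 2 * ‖f‖ ^ 2) ≤ 1 / 2 * ‖Dc (Tstar u)‖ ^ 2 - ⟪f, u⟫
      rw [key, hQ]
      have h2 : 0 ≤ ‖u - f‖ ^ 2 := sq_nonneg _
      have h3 : ‖u - f‖ ^ 2 = ‖u‖ ^ 2 - 2 * ⟪u, f⟫ + ‖f‖ ^ 2 := norm_sub_sq_real u f
      have h4 : ⟪f, u⟫ = ⟪u, f⟫ := real_inner_comm u f
      nlinarith
  · intro h f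
    obtain ⟨⟨u₀, hu₀⟩, _⟩ := h f
    simp only at hu₀
    have hq : ‖u₀‖ ^ 2 ≤ ‖Dc (Tstar u₀)‖ ^ 2 := by
      have := (h u₀).2 ⟨u₀, rfl⟩
      simp only at this
      rw [real_inner_self_eq_norm_sq] at this
      linarith
    have h3 : ‖u₀ - f‖ ^ 2 = ‖u₀‖ ^ 2 - 2 * ⟪u₀, f⟫ + ‖f‖ ^ 2 := norm_sub_sq_real u₀ f
    have h4 : ⟪f, u₀⟫ = ⟪u₀, f⟫ := real_inner_comm u₀ f
    have h5 : 0 ≤ ‖u₀ - f‖ ^ 2 := sq_nonneg _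
    have h6 : ‖u₀ - f‖ ^ 2 = 0 := by nlinarith
    have h7 : u₀ = f :=
      sub_eq_zero.mp (norm_eq_zero.mp (pow_eq_zero_iff two_ne_zero |>.mp h6))
    have h8 : ‖Dc (Tstar u₀)‖ ^ 2 = ‖u₀‖ ^ 2 := by nlinarith
    subst h7
    rw [← key]
    exact h8
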